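/- Let δ ∈ [0,1), C > 0, and let (a_k) be nonnegative reals with a_{k+1} ≤ δ^k·a_1 + (C/k)·Σ_{i=0}^{k-1} k·δ^i/(k-i) for all k ≥ 1. Then a_k → 0 as k → ∞. -/

import Mathlib

open Filter

lemma conv_sum_le (δ : ℝ) (hδ0 : 0 ≤ δ) (hδ1 : δ < 1) (k : ℕ) (hk : 1 ≤ k) :
    ∑ i ∈ Finset.range k, δ ^ i / ((k : ℝ) - i) ≤
      (1 - δ)⁻¹ / ((k / 2 : ℕ) + 1) + k * (Real.sqrt δ) ^ (k - 1) := by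
  set m := k / 2 with hm
  have hmk : m ≤ k := Nat.div_le_self _ _
  have hsplit : ∑ i ∈ Finset.range k, δ ^ i / ((k : ℝ) - i) =
      (∑ i ∈ Finset.range (k - m), δ ^ i / ((k : ℝ) - i)) +
      ∑ i ∈ Finset.Ico (k - m) k, δ ^ i / ((k : ℝ) - i) := by
    simp only [Finset.range_eq_Ico]
    exact (Finset.sum_Ico_consecutive (fun i => δ ^ i / ((k : ℝ) - i)) (Nat.zero_le _) (Nat.sub_le _ _)).symm
  rw [hsplit]
  gcongr
  · -- first part
    calc ∑ i ∈ Finset.range (k - m), δ ^ i / ((k : ℝ) - i)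
        ≤ ∑ i ∈ Finset.range (k - m), δ ^ i / ((m : ℝ) + 1) := by
          apply Finset.sum_le_sum
          intro i hi
          rw [Finset.mem_range] at hi
          have h1 : i + m + 1 ≤ k := by omega
          have h2 : (m : ℝ) + 1 ≤ (k : ℝ) - i := by
            have := Nat.cast_le (α := ℝ).2 h1
            push_cast at this ⊢
            linarith
          exact div_le_div_of_nonneg_left (pow_nonneg hδ0 _) (by positivity) h2
      _ = (∑ i ∈ Finset.range (k - m), δ ^ i) / ((m : ℝ) + 1) := by
          rw [Finset.sum_div]
      _ ≤ (1 - δ)⁻¹ / ((m : ℝ) + 1) := by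
          apply div_le_div_of_nonneg_right _ (by positivity)
          exact sum_le_hasSum _ (fun i _ => pow_nonneg hδ0 _)
            (hasSum_geometric_of_lt_one hδ0 hδ1)
  · -- second part
    have hc0 : 0 ≤ Real.sqrt δ := Real.sqrt_nonneg _
    have hc1 : Real.sqrt δ ≤ 1 := by
      rw [show (1:ℝ) = Real.sqrt 1 by simp]
      exact Real.sqrt_le_sqrt (le_of_lt hδ1)
    calc ∑ i ∈ Finset.Ico (k - m) k, δ ^ i / ((k : ℝ) - i)
        ≤ ∑ _i ∈ Finset.Ico (k - m) k, (Real.sqrt δ) ^ (k - 1) := by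
          apply Finset.sum_le_sum
          intro i hi
          rw [Finset.mem_Ico] at hi
          have hki : (1 : ℝ) ≤ (k : ℝ) - i := by
            have := Nat.cast_le (α := ℝ).2 (Nat.succ_le_of_lt hi.2)
            push_cast at this
            linarith
          have h1 : δ ^ i / ((k : ℝ) - i) ≤ δ ^ i := by
            rw [div_le_iff₀ (by linarith)]
            nlinarith [pow_nonneg hδ0 i]
          have h2 : δ ^ i ≤ δ ^ (k - m) :=
            pow_le_pow_of_le_one hδ0 (le_of_lt hδ1) hi.1
          have h3 : δ ^ (k - m) = (Real.sqrt δ) ^ (2 * (k - m)) := by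
            rw [pow_mul, Real.sq_sqrt hδ0]
          have h4 : (Real.sqrt δ) ^ (2 * (k - m)) ≤ (Real.sqrt δ) ^ (k - 1) :=
            pow_le_pow_of_le_one hc0 hc1 (by omega)
          linarith
      _ = (m : ℝ) * (Real.sqrt δ) ^ (k - 1) := by
          rw [Finset.sum_const, Nat.card_Ico]
          have : k - (k - m) = m := by omega
          rw [this, nsmul_eq_mul]
      _ ≤ (k : ℝ) * (Real.sqrt δ) ^ (k - 1) :=
          mul_le_mul_of_nonneg_right (by exact_mod_cast hmk) (pow_nonneg hc0 _)

theorem sequence_bound_tendsto_zero (a : ℕ → ℝ) (δ C : ℝ)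
    (hδ0 : 0 ≤ δ) (hδ1 : δ < 1) (hC : 0 < C)
    (ha : ∀ k, 0 ≤ a k)
    (hbound : ∀ k : ℕ, 1 ≤ k →
      a (k + 1) ≤ δ ^ k * a 1 + (C / k) * ∑ i ∈ Finset.range k, (k * δ ^ i) / ((k : ℝ) - i)) :
    Tendsto a atTop (nhds 0) := by
  set c := Real.sqrt δ with hc
  have hc0 : 0 ≤ c := Real.sqrt_nonneg _
  have hc1 : c < 1 := by
    rw [hc, show (1:ℝ) = Real.sqrt 1 by simp]
    exact Real.sqrt_lt_sqrt hδ0 hδ1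
  -- upper bound function
  set g : ℕ → ℝ := fun k =>
    δ ^ k * a 1 + C * ((1 - δ)⁻¹ / ((k / 2 : ℕ) + 1) + k * c ^ (k - 1)) with hg
  have hub : ∀ k : ℕ, 1 ≤ k → a (k + 1) ≤ g k := by
    intro k hk
    have hk0 : (k : ℝ) ≠ 0 := Nat.cast_ne_zero.2 (by omega)
    have heq : (C / k) * ∑ i ∈ Finset.range k, ((k : ℝ) * δ ^ i) / ((k : ℝ) - i)
        = C * ∑ i ∈ Finset.range k, δ ^ i / ((k : ℝ) - i) := by
      rw [Finset.mul_sum, Finset.mul_sum]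
      apply Finset.sum_congr rfl
      intro i _
      rw [mul_div_assoc, ← mul_assoc, div_mul_cancel₀ C hk0]
    have h1 := hbound k hk
    rw [heq] at h1
    have h2 := conv_sum_le δ hδ0 hδ1 k hk
    have h3 : C * ∑ i ∈ Finset.range k, δ ^ i / ((k : ℝ) - i)
        ≤ C * ((1 - δ)⁻¹ / ((k / 2 : ℕ) + 1) + k * c ^ (k - 1)) := by
      exact mul_le_mul_of_nonneg_left h2 (le_of_lt hC)
    simp only [hg]
    linarith
  -- g tends to 0
  have hg0 : Tendsto g atTop (nhds 0) := by
    have t1 : Tendsto (fun k : ℕ => δ ^ k * a 1) atTop (nhds 0) := by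
      simpa using (tendsto_pow_atTop_nhds_zero_of_lt_one hδ0 hδ1).mul_const (a 1)
    have t2 : Tendsto (fun k : ℕ => ((k / 2 : ℕ) : ℝ) + 1) atTop atTop := by
      apply tendsto_atTop_add_const_right
      apply tendsto_natCast_atTop_atTop.comp
      exact tendsto_atTop_atTop.2 fun b => ⟨2 * b, fun a ha => by omega⟩
    have t3 : Tendsto (fun k : ℕ => (1 - δ)⁻¹ / (((k / 2 : ℕ) : ℝ) + 1)) atTop (nhds 0) :=
      Tendsto.div_atTop tendsto_const_nhds t2
    have t4 : Tendsto (fun k : ℕ => (k : ℝ) * c ^ (k - 1)) atTop (nhds 0) := by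
      have base : Tendsto (fun n : ℕ => ((n : ℝ) + 1) * c ^ n) atTop (nhds 0) := by
        have hA := tendsto_self_mul_const_pow_of_lt_one hc0 hc1
        have hB := tendsto_pow_atTop_nhds_zero_of_lt_one hc0 hc1
        have := hA.add hB
        simp only [add_zero] at this
        convert this using 2 with n
        ring
      have comp : Tendsto (fun k : ℕ => ((↑(k - 1) : ℝ) + 1) * c ^ (k - 1)) atTop (nhds 0) :=
        base.comp (tendsto_sub_atTop_nat 1)
      apply comp.congr'
      filter_upwards [eventually_ge_atTop 1] with k hk
      have : ((k - 1 : ℕ) : ℝ) + 1 = (k : ℝ) := by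
        have : k - 1 + 1 = k := by omega
        exact_mod_cast congrArg (Nat.cast (R := ℝ)) this
      rw [this]
    have := (t3.add t4).const_mul C
    have h := t1.add this
    simpa using h
  -- squeeze for shifted sequence
  have hshift : Tendsto (fun k => a (k + 1)) atTop (nhds 0) := by
    apply squeeze_zero' (Eventually.of_forall fun k => ha _)
    · filter_upwards [eventually_ge_atTop 1] with k hk
      exact hub k hk
    · exact hg0
  exact (tendsto_add_atTop_iff_nat 1).1 hshift
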